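/- Let a > 0 and let F : [a, ∞) → (0, ∞) be nondecreasing, bounded on every compact subset of [a, ∞), and regularly varying of index ρ, i.e. lim_{x→∞} F(λx)/F(x) = λ^ρ for every λ > 0. Then for every σ < ρ, the function x ↦ x^{−σ}·F(x) is almost increasing on [a, ∞), i.e. there exists a constant K ≥ 1 such that x^{−σ}·F(x) ≤ K·y^{−σ}·F(y) for all y ≥ x ≥ a. -/
import Mathlib


open Filter Real Topology

/-- Let `a > 0` and `F : [a, ∞) → (0, ∞)` be nondecreasing, bounded on
compact subsets of `[a, ∞)`, and regularly varying of index `ρ`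
(`lim_{x→∞} F (λ x) / F x = λ ^ ρ` for every `λ > 0`). Then for every `σ < ρ` the
function `x ↦ x ^ (-σ) * F x` is almost increasing on `[a, ∞)`. -/
theorem stmt_17 (a ρ : ℝ) (ha : 0 < a) (F : ℝ → ℝ)
    (hFpos : ∀ x : ℝ, a ≤ x → 0 < F x)
    (hFmono : ∀ x y : ℝ, a ≤ x → x ≤ y → F x ≤ F y)
    (hFbdd : ∀ b : ℝ, a ≤ b → ∃ C : ℝ, ∀ x : ℝ, a ≤ x → x ≤ b → F x ≤ C)
    (hRV : ∀ lam : ℝ, 0 < lam →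
      Filter.Tendsto (fun x : ℝ => F (lam * x) / F x) Filter.atTop
        (nhds (lam ^ ρ))) :
    ∀ σ : ℝ, σ < ρ → ∃ K : ℝ, 1 ≤ K ∧ ∀ x y : ℝ, a ≤ x → x ≤ y →
      x ^ (-σ) * F x ≤ K * (y ^ (-σ) * F y) := by
  intro σ hσ
  have h2 : (1:ℝ) < 2 := one_lt_two
  set Kd : ℝ := max 1 ((2:ℝ) ^ σ) with hKd
  have hKd1 : (1:ℝ) ≤ Kd := le_max_left _ _
  have hKd0 : (0:ℝ) < Kd := lt_of_lt_of_le one_pos hKd1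
  -- Step 1: from regular variation, find X beyond which F (2x) ≥ 2^σ F x.
  have hlt : (2:ℝ) ^ σ < (2:ℝ) ^ ρ := (Real.rpow_lt_rpow_left_iff h2).mpr hσ
  have hev : ∀ᶠ x in atTop, (2:ℝ) ^ σ < F (2 * x) / F x :=
    (hRV 2 two_pos).eventually (eventually_gt_nhds hlt)
  obtain ⟨X0, hX0⟩ := eventually_atTop.mp hev
  set X : ℝ := max a X0 with hXdef
  have hXa : a ≤ X := le_max_left _ _
  have hXpos : 0 < X := lt_of_lt_of_le ha hXa
  have hstep : ∀ x : ℝ, X ≤ x → (2:ℝ) ^ σ * F x ≤ F (2 * x) := by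
    intro x hx
    have hxa : a ≤ x := le_trans hXa hx
    have h := hX0 x (le_trans (le_max_right a X0) hx)
    exact le_of_lt ((lt_div_iff₀ (hFpos x hxa)).mp h)
  -- Step 2: iterate.
  have hiter : ∀ n : ℕ, ∀ x : ℝ, X ≤ x → ((2:ℝ) ^ σ) ^ n * F x ≤ F ((2:ℝ) ^ n * x) := by
    intro n
    induction n with
    | zero => intro x hx; simp
    | succ n ih =>
      intro x hx
      have hx0 : 0 < x := lt_of_lt_of_le hXpos hx
      have h2n : (1:ℝ) ≤ 2 ^ n := one_le_pow₀ (by norm_num)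
      have hx2 : X ≤ (2:ℝ) ^ n * x := le_trans hx (le_mul_of_one_le_left hx0.le h2n)
      have h2σ : (0:ℝ) ≤ (2:ℝ) ^ σ := (Real.rpow_pos_of_pos two_pos σ).le
      calc ((2:ℝ) ^ σ) ^ (n + 1) * F x = (2:ℝ) ^ σ * (((2:ℝ) ^ σ) ^ n * F x) := by ring
        _ ≤ (2:ℝ) ^ σ * F ((2:ℝ) ^ n * x) := by
            exact mul_le_mul_of_nonneg_left (ih x hx) h2σ
        _ ≤ F (2 * ((2:ℝ) ^ n * x)) := hstep _ hx2
        _ = F ((2:ℝ) ^ (n + 1) * x) := by rw [pow_succ]; ring_nf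
  -- Step 3: the main inequality beyond X.
  have hmain : ∀ x y : ℝ, X ≤ x → x ≤ y →
      x ^ (-σ) * F x ≤ Kd * (y ^ (-σ) * F y) := by
    intro x y hx hxy
    have hx0 : 0 < x := lt_of_lt_of_le hXpos hx
    have hy0 : 0 < y := lt_of_lt_of_le hx0 hxy
    have hyx1 : (1:ℝ) ≤ y / x := (one_le_div hx0).mpr hxy
    have hyx0 : 0 < y / x := div_pos hy0 hx0
    set L : ℝ := Real.logb 2 (y / x) with hLdef
    have hL0 : 0 ≤ L := Real.logb_nonneg h2 hyx1
    set n : ℕ := ⌊L⌋.toNat with hndef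
    have heq : (n:ℝ) = ((⌊L⌋ : ℤ) : ℝ) := by
      rw [hndef]; exact_mod_cast congrArg (fun z : ℤ => (z : ℝ))
        (Int.toNat_of_nonneg (Int.floor_nonneg.mpr hL0))
    have hnL : (n:ℝ) ≤ L := heq.trans_le (Int.floor_le L)
    have hLn : L < (n:ℝ) + 1 := by
      have h1 : L < ((⌊L⌋ : ℤ) : ℝ) + 1 := Int.lt_floor_add_one L
      linarith [heq.ge]
    set c : ℝ := (2:ℝ) ^ n with hcdef
    have hc0 : 0 < c := pow_pos two_pos n
    have hc1 : (1:ℝ) ≤ c := one_le_pow₀ (by norm_num)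
    have hlow : c ≤ y / x := by
      have := (Real.le_logb_iff_rpow_le h2 hyx0).mp hnL
      rwa [Real.rpow_natCast] at this
    have hup : y / x < 2 * c := by
      have h' := (Real.logb_lt_iff_lt_rpow h2 hyx0).mp hLn
      have : (2:ℝ) ^ ((n:ℝ) + 1) = 2 * c := by
        rw [show ((n:ℝ) + 1) = ((n + 1 : ℕ) : ℝ) by push_cast; ring,
          Real.rpow_natCast, pow_succ]
        ring
      rwa [this] at h'
    have hlow' : c * x ≤ y := by
      calc c * x ≤ (y / x) * x := mul_le_mul_of_nonneg_right hlow hx0.le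
        _ = y := by field_simp
    have hup' : y ≤ 2 * (c * x) := by
      have : y / x * x ≤ (2 * c) * x := mul_le_mul_of_nonneg_right hup.le hx0.le
      rw [div_mul_cancel₀ _ (ne_of_gt hx0)] at this
      linarith
    have hcσ : ((2:ℝ) ^ σ) ^ n = c ^ σ := by
      rw [hcdef, ← Real.rpow_natCast ((2:ℝ) ^ σ) n, ← Real.rpow_natCast 2 n,
        ← Real.rpow_mul (by norm_num : (0:ℝ) ≤ 2),
        ← Real.rpow_mul (by norm_num : (0:ℝ) ≤ 2), mul_comm]
    have hacx : a ≤ c * x := le_trans (le_trans hXa hx) (le_mul_of_one_le_left hx0.le hc1)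
    have hFy : c ^ σ * F x ≤ F y := by
      rw [← hcσ]
      exact le_trans (hiter n x hx) (hFmono _ _ hacx hlow')
    have hcx0 : 0 < c * x := mul_pos hc0 hx0
    -- key: y ^ σ ≤ Kd * (c ^ σ * x ^ σ)
    have hkey : y ^ σ ≤ Kd * (c ^ σ * x ^ σ) := by
      rcases le_total σ 0 with hσ0 | hσ0
      · have h1 : y ^ σ ≤ (c * x) ^ σ := Real.rpow_le_rpow_of_nonpos hcx0 hlow' hσ0
        have h2'' : (c * x) ^ σ = c ^ σ * x ^ σ := Real.mul_rpow hc0.le hx0.le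
        calc y ^ σ ≤ c ^ σ * x ^ σ := by rw [← h2'']; exact h1
          _ ≤ Kd * (c ^ σ * x ^ σ) := le_mul_of_one_le_left
              (mul_nonneg (Real.rpow_pos_of_pos hc0 σ).le (Real.rpow_pos_of_pos hx0 σ).le) hKd1
      · have h1 : y ^ σ ≤ (2 * (c * x)) ^ σ := Real.rpow_le_rpow hy0.le hup' hσ0
        have h2'' : (2 * (c * x)) ^ σ = (2:ℝ) ^ σ * ((c * x) ^ σ) :=
          Real.mul_rpow (by norm_num) hcx0.le
        have h3 : (c * x) ^ σ = c ^ σ * x ^ σ := Real.mul_rpow hc0.le hx0.le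
        calc y ^ σ ≤ (2:ℝ) ^ σ * (c ^ σ * x ^ σ) := by rw [← h3, ← h2'']; exact h1
          _ ≤ Kd * (c ^ σ * x ^ σ) := mul_le_mul_of_nonneg_right (le_max_right _ _)
              (mul_nonneg (Real.rpow_pos_of_pos hc0 σ).le (Real.rpow_pos_of_pos hx0 σ).le)
    have hy1 : y ^ σ * y ^ (-σ) = 1 := by
      rw [← Real.rpow_add hy0]; simp
    have hx1 : x ^ σ * x ^ (-σ) = 1 := by
      rw [← Real.rpow_add hx0]; simp
    have hFx0 : 0 < F x := hFpos x (le_trans hXa hx)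
    have hyneg : 0 < y ^ (-σ) := Real.rpow_pos_of_pos hy0 _
    have hxneg : 0 < x ^ (-σ) := Real.rpow_pos_of_pos hx0 _
    calc x ^ (-σ) * F x = x ^ (-σ) * F x * (y ^ σ * y ^ (-σ)) := by rw [hy1]; ring
      _ ≤ x ^ (-σ) * F x * ((Kd * (c ^ σ * x ^ σ)) * y ^ (-σ)) := by
          apply mul_le_mul_of_nonneg_left _ (mul_pos hxneg hFx0).le
          exact mul_le_mul_of_nonneg_right hkey hyneg.le
      _ = Kd * y ^ (-σ) * (c ^ σ * F x) * (x ^ σ * x ^ (-σ)) := by ring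
      _ = Kd * y ^ (-σ) * (c ^ σ * F x) := by rw [hx1]; ring
      _ ≤ Kd * y ^ (-σ) * F y := mul_le_mul_of_nonneg_left hFy
          (mul_pos hKd0 hyneg).le
      _ = Kd * (y ^ (-σ) * F y) := by ring
  -- Step 4: handle the compact part [a, X].
  obtain ⟨C, hC⟩ := hFbdd X hXa
  have hFa0 : 0 < F a := hFpos a le_rfl
  have hC0 : 0 < C := lt_of_lt_of_le hFa0 (hC a le_rfl hXa)
  have haneg : 0 < a ^ (-σ) := Real.rpow_pos_of_pos ha _
  have hXneg : 0 < X ^ (-σ) := Real.rpow_pos_of_pos hXpos _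
  set m1 : ℝ := min (a ^ (-σ)) (X ^ (-σ)) * F a with hm1def
  have hm10 : 0 < m1 := mul_pos (lt_min haneg hXneg) hFa0
  have hm1 : ∀ y : ℝ, a ≤ y → y ≤ X → m1 ≤ y ^ (-σ) * F y := by
    intro y hay hyX
    have hy0 : 0 < y := lt_of_lt_of_le ha hay
    have h1 : min (a ^ (-σ)) (X ^ (-σ)) ≤ y ^ (-σ) := by
      rcases le_total σ 0 with hσ0 | hσ0
      · exact le_trans (min_le_left _ _)
          (Real.rpow_le_rpow ha.le hay (neg_nonneg.mpr hσ0))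
      · exact le_trans (min_le_right _ _)
          (Real.rpow_le_rpow_of_nonpos hy0 hyX (neg_nonpos.mpr hσ0))
    exact mul_le_mul h1 (hFmono a y le_rfl hay) hFa0.le
      (Real.rpow_pos_of_pos hy0 _).le
  set m2 : ℝ := X ^ (-σ) * F X / Kd with hm2def
  have hm20 : 0 < m2 := div_pos (mul_pos hXneg (hFpos X hXa)) hKd0
  have hm2 : ∀ y : ℝ, X ≤ y → m2 ≤ y ^ (-σ) * F y := by
    intro y hXy
    have := hmain X y le_rfl hXy
    rw [hm2def, div_le_iff₀ hKd0]
    linarith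
  set m : ℝ := min m1 m2 with hmdef
  have hm0 : 0 < m := lt_min hm10 hm20
  have hm : ∀ y : ℝ, a ≤ y → m ≤ y ^ (-σ) * F y := by
    intro y hay
    rcases le_total y X with h | h
    · exact le_trans (min_le_left _ _) (hm1 y hay h)
    · exact le_trans (min_le_right _ _) (hm2 y h)
  set M : ℝ := max (a ^ (-σ)) (X ^ (-σ)) * C with hMdef
  have hM : ∀ x : ℝ, a ≤ x → x ≤ X → x ^ (-σ) * F x ≤ M := by
    intro x hax hxX
    have hx0 : 0 < x := lt_of_lt_of_le ha hax
    have h1 : x ^ (-σ) ≤ max (a ^ (-σ)) (X ^ (-σ)) := by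
      rcases le_total σ 0 with hσ0 | hσ0
      · exact le_trans (Real.rpow_le_rpow hx0.le hxX (neg_nonneg.mpr hσ0))
          (le_max_right _ _)
      · exact le_trans (Real.rpow_le_rpow_of_nonpos ha hax (neg_nonpos.mpr hσ0))
          (le_max_left _ _)
    exact mul_le_mul h1 (hC x hax hxX) (hFpos x hax).le
      (le_trans haneg.le (le_max_left _ _))
  refine ⟨max Kd (M / m), le_trans hKd1 (le_max_left _ _), ?_⟩
  intro x y hax hxy
  have hay : a ≤ y := le_trans hax hxy
  have hy0 : 0 < y := lt_of_lt_of_le ha hay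
  have hPy0 : 0 ≤ y ^ (-σ) * F y := (mul_pos (Real.rpow_pos_of_pos hy0 _) (hFpos y hay)).le
  rcases le_total X x with h | h
  · calc x ^ (-σ) * F x ≤ Kd * (y ^ (-σ) * F y) := hmain x y h hxy
      _ ≤ max Kd (M / m) * (y ^ (-σ) * F y) :=
        mul_le_mul_of_nonneg_right (le_max_left _ _) hPy0
  · have hMm0 : 0 ≤ M / m := by
      have hx0 : 0 < x := lt_of_lt_of_le ha hax
      have : 0 < M := lt_of_lt_of_le (mul_pos (Real.rpow_pos_of_pos hx0 _) (hFpos x hax))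
        (hM x hax h)
      exact (div_pos this hm0).le
    calc x ^ (-σ) * F x ≤ M := hM x hax h
      _ = (M / m) * m := by field_simp
      _ ≤ (M / m) * (y ^ (-σ) * F y) := mul_le_mul_of_nonneg_left (hm y hay) hMm0
      _ ≤ max Kd (M / m) * (y ^ (-σ) * F y) :=
        mul_le_mul_of_nonneg_right (le_max_right _ _) hPy0
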